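/- Let L be a distributive lattice, M an additive commutative group, and μ : L → M a function satisfying μ(a ⊔ b) + μ(a ⊓ b) = μ(a) + μ(b) for all a, b ∈ L. Then for every r ≥ 1 and all a₁, …, a_r ∈ L, μ(a₁ ⊓ a₂ ⊓ ⋯ ⊓ a_r) = ∑_{∅ ≠ I ⊆ {1,…,r}} (−1)^{|I|+1} μ( ⊔_{i ∈ I} a_i ), where the sum is over all nonempty subsets I of {1,…,r}. -/

import Mathlib

open Finset

private lemma sup'_const_sup {α ι : Type*} [SemilatticeSup α] (c : α) (f : ι → α)
    (s : Finset ι) (hs : s.Nonempty) :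
    s.sup' hs (fun j => c ⊔ f j) = c ⊔ s.sup' hs f := by
  induction hs using Finset.Nonempty.cons_induction with
  | singleton i => rfl
  | cons i t hit ht IH =>
    rw [Finset.sup'_cons ht, Finset.sup'_cons ht, IH, sup_sup_sup_comm, sup_idem]

private noncomputable def gFun {L M ι : Type*} [DistribLattice L] [AddCommGroup M]
    (μ : L → M) (a : ι → L) (I : Finset ι) : M :=
  if h : I.Nonempty then μ (I.sup' h a) else 0

private lemma gFun_of_nonempty {L M ι : Type*} [DistribLattice L] [AddCommGroup M]
    (μ : L → M) (a : ι → L) {I : Finset ι} (h : I.Nonempty) :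
    gFun μ a I = μ (I.sup' h a) := dif_pos h

private lemma incl_excl_aux {L M ι : Type*} [DistribLattice L] [AddCommGroup M] [DecidableEq ι]
    (μ : L → M) (hμ : ∀ a b : L, μ (a ⊔ b) + μ (a ⊓ b) = μ a + μ b)
    (s : Finset ι) (hs : s.Nonempty) :
    ∀ a : ι → L, μ (s.inf' hs a) =
      ∑ I ∈ s.powerset.filter Finset.Nonempty, (-1 : ℤ) ^ (I.card + 1) • gFun μ a I := by
  induction hs using Finset.Nonempty.cons_induction with
  | singleton i =>
    intro a
    have hp : ({i} : Finset ι).powerset.filter Finset.Nonempty = {{i}} := by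
      ext J
      simp only [Finset.mem_filter, Finset.mem_powerset, Finset.subset_singleton_iff,
        Finset.mem_singleton, Finset.nonempty_iff_ne_empty]
      constructor
      · rintro ⟨h1 | h1, h2⟩ <;> simp_all
      · rintro rfl
        exact ⟨Or.inr rfl, Finset.singleton_ne_empty i⟩
    rw [hp]
    simp [gFun_of_nonempty μ a (Finset.singleton_nonempty i)]
  | cons i t hit ht IH =>
    intro a
    -- LHS
    rw [Finset.inf'_cons ht]
    have key : μ (a i ⊓ t.inf' ht a) = μ (a i) + μ (t.inf' ht a) - μ (a i ⊔ t.inf' ht a) := by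
      have h := hμ (a i) (t.inf' ht a)
      have : μ (a i ⊓ t.inf' ht a) + μ (a i ⊔ t.inf' ht a) = μ (a i) + μ (t.inf' ht a) := by
        rw [add_comm]; exact h
      exact eq_sub_of_add_eq this
    rw [key, Finset.inf'_sup_distrib_left, IH a, IH (fun j => a i ⊔ a j)]
    -- RHS : decompose powerset of cons i t
    have hpow : (Finset.cons i t hit).powerset.filter Finset.Nonempty =
        (t.powerset.filter Finset.Nonempty) ∪
          ((t.powerset.image (insert i)).filter Finset.Nonempty) := by
      rw [Finset.cons_eq_insert, Finset.powerset_insert, Finset.filter_union]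
    have hdisj : Disjoint (t.powerset.filter Finset.Nonempty)
        ((t.powerset.image (insert i)).filter Finset.Nonempty) := by
      rw [Finset.disjoint_left]
      rintro J hJ hJ'
      have h1 : J ⊆ t := Finset.mem_powerset.mp (Finset.mem_filter.mp hJ).1
      obtain ⟨K, _, rfl⟩ := Finset.mem_image.mp (Finset.mem_filter.mp hJ').1
      exact hit (h1 (Finset.mem_insert_self i K))
    have himg : ((t.powerset.image (insert i)).filter Finset.Nonempty) =
        t.powerset.image (insert i) := by
      apply Finset.filter_true_of_mem
      intro J hJ
      obtain ⟨K, _, rfl⟩ := Finset.mem_image.mp hJ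
      exact Finset.insert_nonempty i K
    rw [hpow, Finset.sum_union hdisj, himg]
    have hinj : ∀ J₁ ∈ t.powerset, ∀ J₂ ∈ t.powerset,
        insert i J₁ = insert i J₂ → J₁ = J₂ := by
      intro J₁ h₁ J₂ h₂ h
      have hi₁ : i ∉ J₁ := fun hc => hit (Finset.mem_powerset.mp h₁ hc)
      have hi₂ : i ∉ J₂ := fun hc => hit (Finset.mem_powerset.mp h₂ hc)
      rw [← Finset.erase_insert hi₁, ← Finset.erase_insert hi₂, h]
    rw [Finset.sum_image hinj]
    -- compute the image sum
    have hterm : ∀ J ∈ t.powerset,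
        (-1 : ℤ) ^ ((insert i J).card + 1) • gFun μ a (insert i J) =
          (if h : J.Nonempty then
            -((-1 : ℤ) ^ (J.card + 1) • gFun μ (fun j => a i ⊔ a j) J) else μ (a i)) := by
      intro J hJ
      have hiJ : i ∉ J := fun hc => hit (Finset.mem_powerset.mp hJ hc)
      by_cases h : J.Nonempty
      · rw [dif_pos h, Finset.card_insert_of_notMem hiJ,
          gFun_of_nonempty μ a (Finset.insert_nonempty i J),
          gFun_of_nonempty _ _ h, Finset.sup'_insert h, ← sup'_const_sup (a i) a J h]
        rw [pow_succ]
        simp [neg_smul]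
      · rw [not_nonempty_iff_eq_empty] at h
        subst h
        rw [dif_neg (by simp)]
        simp [gFun_of_nonempty μ a (Finset.singleton_nonempty i)]
    rw [Finset.sum_congr rfl hterm]
    -- split off the empty set
    have hmem : (∅ : Finset ι) ∈ t.powerset := Finset.empty_mem_powerset t
    rw [← Finset.add_sum_erase _ _ hmem]
    have herase : t.powerset.erase ∅ = t.powerset.filter Finset.Nonempty := by
      ext J
      simp [Finset.mem_erase, Finset.mem_filter, Finset.nonempty_iff_ne_empty, and_comm]
    rw [herase, dif_neg (by simp)]
    rw [Finset.sum_congr rfl (fun J (hJ : J ∈ t.powerset.filter Finset.Nonempty) =>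
        (dif_pos (Finset.mem_filter.mp hJ).2 : (if h : J.Nonempty then
          -((-1 : ℤ) ^ (J.card + 1) • gFun μ (fun j => a i ⊔ a j) J) else μ (a i)) = _)),
      Finset.sum_neg_distrib]
    abel

/-- Full inclusion–exclusion: if `μ : L → M` is a valuation on a distributive lattice
(`μ(a ⊔ b) + μ(a ⊓ b) = μ(a) + μ(b)`), then for `r ≥ 1` and `a₁, …, a_r ∈ L`,
`μ(a₁ ⊓ ⋯ ⊓ a_r) = ∑_{∅ ≠ I ⊆ {1,…,r}} (−1)^{|I|+1} μ(⊔_{i∈I} a_i)`. -/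
theorem inclusion_exclusion {L M : Type*} [DistribLattice L] [AddCommGroup M]
    (μ : L → M) (hμ : ∀ a b : L, μ (a ⊔ b) + μ (a ⊓ b) = μ a + μ b)
    (r : ℕ) (hr : 1 ≤ r) (a : Fin r → L) :
    μ (Finset.univ.inf' ⟨⟨0, hr⟩, Finset.mem_univ _⟩ a) =
      ∑ I ∈ ((Finset.univ : Finset (Fin r)).powerset.filter Finset.Nonempty).attach,
        (-1 : ℤ) ^ (I.1.card + 1) • μ (I.1.sup' (Finset.mem_filter.mp I.2).2 a) := by
  rw [incl_excl_aux μ hμ Finset.univ ⟨⟨0, hr⟩, Finset.mem_univ _⟩ a,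
    ← Finset.sum_attach _ (fun I => (-1 : ℤ) ^ (I.card + 1) • gFun μ a I)]
  exact Finset.sum_congr rfl fun I _ => by
    rw [gFun_of_nonempty μ a (Finset.mem_filter.mp I.2).2]
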